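/- The 1D Lax–Friedrichs scheme with the standard viscosity parameter is not positivity-preserving for any CFL number: with the ideal EOS of index γ = 1.4, for every constant C > 0 there exist states U_L, U_M, U_R ∈ 𝒢 whose first magnetic components coincide, such that, setting α = max{𝓡₁(U_L), 𝓡₁(U_M), 𝓡₁(U_R)} and using the LF numerical flux F̂₁ with viscosity α, the updated state Ū := U_M − (C/α)·( F̂₁(U_M, U_R) − F̂₁(U_L, U_M) ) (i.e. the LF update with time-step ratio α·Δt/Δx equal to C) does not belong to 𝒢. -/

import Mathlib

open scoped BigOperators

noncomputable section

/-- Euclidean dot product on ℝ³. -/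
def dot3 (a b : Fin 3 → ℝ) : ℝ := ∑ j, a j * b j

/-- Squared Euclidean norm on ℝ³. -/
def normSq3 (a : Fin 3 → ℝ) : ℝ := ∑ j, (a j) ^ 2

/-- Momentum components of a state `U = (ρ, m, B, E) ∈ ℝ⁸`. -/
def mC (U : Fin 8 → ℝ) : Fin 3 → ℝ := ![U 1, U 2, U 3]

/-- Magnetic-field components of a state. -/
def BC (U : Fin 8 → ℝ) : Fin 3 → ℝ := ![U 4, U 5, U 6]

/-- Velocity components `v = m / ρ`. -/
def velC (U : Fin 8 → ℝ) : Fin 3 → ℝ := fun j => mC U j / U 0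

/-- Internal energy `𝓔(U) = E − (|m|²/ρ + |B|²)/2`. -/
def intE (U : Fin 8 → ℝ) : ℝ := U 7 - (normSq3 (mC U) / U 0 + normSq3 (BC U)) / 2

/-- The admissible set `𝒢`. -/
def admisSet : Set (Fin 8 → ℝ) := {U | 0 < U 0 ∧ 0 < intE U}

/-- The vector `n* = (|v*|²/2, −v*, −B*, 1) ∈ ℝ⁸`. -/
def nstar (vs Bs : Fin 3 → ℝ) : Fin 8 → ℝ :=
  ![normSq3 vs / 2, -vs 0, -vs 1, -vs 2, -Bs 0, -Bs 1, -Bs 2, 1]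

/-- Euclidean dot product on ℝ⁸. -/
def dot8 (U V : Fin 8 → ℝ) : ℝ := ∑ k, U k * V k

/-- Flux `F_i(U)` of a state `U` with assigned pressure `p`, in direction `i`. -/
def flux (p : ℝ) (i : Fin 3) (U : Fin 8 → ℝ) : Fin 8 → ℝ :=
  let ρ := U 0
  let v := velC U
  let B := BC U
  let ptot := p + normSq3 B / 2
  ![ρ * v i,
    ρ * v i * v 0 - B i * B 0 + (if i = 0 then ptot else 0),
    ρ * v i * v 1 - B i * B 1 + (if i = 1 then ptot else 0),
    ρ * v i * v 2 - B i * B 2 + (if i = 2 then ptot else 0),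
    v i * B 0 - B i * v 0,
    v i * B 1 - B i * v 1,
    v i * B 2 - B i * v 2,
    v i * (U 7 + ptot) - B i * dot3 v B]

/-- The fast-speed-type quantity built from a sound-speed-like value `cs`:
`(1/√2)·√( cs² + |B|²/ρ + √((cs² + |B|²/ρ)² − 4cs²B_i²/ρ) )`. -/
def fastLike (cs : ℝ) (U : Fin 8 → ℝ) (i : Fin 3) : ℝ :=
  (1 / Real.sqrt 2) *
    Real.sqrt (cs ^ 2 + normSq3 (BC U) / U 0 +
      Real.sqrt ((cs ^ 2 + normSq3 (BC U) / U 0) ^ 2 - 4 * cs ^ 2 * (BC U i) ^ 2 / U 0))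

/-- `𝓢_s = p/(ρ√(2e))` for a state `U` with pressure `p`. -/
def sSound (p : ℝ) (U : Fin 8 → ℝ) : ℝ :=
  p / (U 0 * Real.sqrt (2 * (intE U / U 0)))

/-- `𝓢_i` for a state `U` with pressure `p`. -/
def sFast (p : ℝ) (U : Fin 8 → ℝ) (i : Fin 3) : ℝ := fastLike (sSound p U) U i

/-- `f(U, Ũ; σ) = (|B̃ − B|/√2)·√(σ²/ρ + (1−σ)²/ρ̃)`. -/
def fCoup (U Ut : Fin 8 → ℝ) (σ : ℝ) : ℝ :=
  (Real.sqrt (normSq3 (fun j => BC Ut j - BC U j)) / Real.sqrt 2) *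
    Real.sqrt (σ ^ 2 / U 0 + (1 - σ) ^ 2 / Ut 0)

/-- `α_i(U, Ũ; σ)` for states `U, Ũ` with pressures `p, p̃`. -/
def alphaSig (i : Fin 3) (U Ut : Fin 8 → ℝ) (p pt : ℝ) (σ : ℝ) : ℝ :=
  max (max (|velC U i| + sFast p U i) (|velC Ut i| + sFast pt Ut i))
      (|σ * velC U i + (1 - σ) * velC Ut i| + max (sFast p U i) (sFast pt Ut i))
  + fCoup U Ut σ

/-- `α_i(U, Ũ) = inf_{σ ∈ ℝ} α_i(U, Ũ; σ)`. -/
def alphaInf (i : Fin 3) (U Ut : Fin 8 → ℝ) (p pt : ℝ) : ℝ :=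
  ⨅ σ : ℝ, alphaSig i U Ut p pt σ

/-- Ideal-EOS pressure `p = (γ−1)ρe = (γ−1)𝓔(U)`. -/
def idealP (γ : ℝ) (U : Fin 8 → ℝ) : ℝ := (γ - 1) * intE U

/-- Ideal-EOS sound speed `𝓒_s = √(γp/ρ)`. -/
def cSound (γ : ℝ) (U : Fin 8 → ℝ) : ℝ := Real.sqrt (γ * idealP γ U / U 0)

/-- Ideal-EOS fast speed `𝓒_i`. -/
def cFast (γ : ℝ) (U : Fin 8 → ℝ) (i : Fin 3) : ℝ := fastLike (cSound γ U) U i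

/-- Ideal-EOS spectral radius `𝓡_i(U) = |v_i| + 𝓒_i`. -/
def specR (γ : ℝ) (i : Fin 3) (U : Fin 8 → ℝ) : ℝ := |velC U i| + cFast γ U i

/-- Pressure of a state under a general EOS function `P(ρ, e)`. -/
def presOf (P : ℝ → ℝ → ℝ) (U : Fin 8 → ℝ) : ℝ := P (U 0) (intE U / U 0)

/-- Lax–Friedrichs numerical flux with viscosity `α`, under EOS function `P`. -/
def lfFlux (P : ℝ → ℝ → ℝ) (α : ℝ) (i : Fin 3) (Um Up : Fin 8 → ℝ) : Fin 8 → ℝ :=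
  (1 / 2 : ℝ) • (flux (presOf P Um) i Um + flux (presOf P Up) i Up - α • (Up - Um))

/-- Lax–Friedrichs numerical flux with viscosity `α`, ideal EOS of index `γ`. -/
def lfFluxIdeal (γ : ℝ) (α : ℝ) (i : Fin 3) (Um Up : Fin 8 → ℝ) : Fin 8 → ℝ :=
  (1 / 2 : ℝ) • (flux (idealP γ Um) i Um + flux (idealP γ Up) i Up - α • (Up - Um))


lemma normSq3_nonneg (a : Fin 3 → ℝ) : 0 ≤ normSq3 a :=
  Finset.sum_nonneg (fun _ _ => sq_nonneg _)

/-- Crude upper bound on the fast-like speed. -/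
lemma fastLike_le (c : ℝ) (U : Fin 8 → ℝ) (i : Fin 3) (h0 : 0 < U 0) :
    fastLike c U i ≤ Real.sqrt (c ^ 2 + normSq3 (BC U) / U 0) := by
  rw [fastLike]
  set X := c ^ 2 + normSq3 (BC U) / U 0 with hX
  have hXnn : 0 ≤ X := by
    have := normSq3_nonneg (BC U)
    positivity
  have hin : Real.sqrt (X ^ 2 - 4 * c ^ 2 * (BC U i) ^ 2 / U 0) ≤ X := by
    have h1 : X ^ 2 - 4 * c ^ 2 * (BC U i) ^ 2 / U 0 ≤ X ^ 2 := by
      have h2 : 0 ≤ 4 * c ^ 2 * (BC U i) ^ 2 / U 0 := by positivity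
      linarith
    calc Real.sqrt (X ^ 2 - 4 * c ^ 2 * (BC U i) ^ 2 / U 0)
        ≤ Real.sqrt (X ^ 2) := Real.sqrt_le_sqrt h1
      _ = X := Real.sqrt_sq hXnn
  have h2 : Real.sqrt (X + Real.sqrt (X ^ 2 - 4 * c ^ 2 * (BC U i) ^ 2 / U 0))
      ≤ Real.sqrt (2 * X) := by
    apply Real.sqrt_le_sqrt; linarith
  have hs2 : Real.sqrt 2 ≠ 0 := by positivity
  calc 1 / Real.sqrt 2 * Real.sqrt (X + Real.sqrt (X ^ 2 - 4 * c ^ 2 * (BC U i) ^ 2 / U 0))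
      ≤ 1 / Real.sqrt 2 * Real.sqrt (2 * X) := by
        apply mul_le_mul_of_nonneg_left h2 (by positivity)
    _ = Real.sqrt X := by
        rw [Real.sqrt_mul (by norm_num : (0:ℝ) ≤ 2)]
        field_simp

/-- The left state of the counterexample. -/
def ULs (d : ℝ) : Fin 8 → ℝ := ![1/100, 0, -1/5, 0, 1, 0, 0, d + 5/2]

/-- The middle state of the counterexample. -/
def UMs (d : ℝ) : Fin 8 → ℝ := ![1, 0, 0, 0, 1, 2, 0, d + 5/2]

/-- The right state of the counterexample. -/
def URs (d : ℝ) : Fin 8 → ℝ := ![199/100, 0, 0, 0, 1, 2, 0, d + 5/2]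

lemma intE_ULs (d : ℝ) : intE (ULs d) = d := by
  rw [intE, show mC (ULs d) = ![0, -1/5, 0] from rfl, show BC (ULs d) = ![(1:ℝ), 0, 0] from rfl,
      show (ULs d) 7 = d + 5/2 from rfl, show (ULs d) 0 = 1/100 from rfl]
  norm_num [normSq3, Fin.sum_univ_three, Matrix.cons_val_two, Matrix.vecHead, Matrix.vecTail]

lemma intE_UMs (d : ℝ) : intE (UMs d) = d := by
  rw [intE, show mC (UMs d) = ![(0:ℝ), 0, 0] from rfl, show BC (UMs d) = ![(1:ℝ), 2, 0] from rfl,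
      show (UMs d) 7 = d + 5/2 from rfl, show (UMs d) 0 = 1 from rfl]
  norm_num [normSq3, Fin.sum_univ_three, Matrix.cons_val_two, Matrix.vecHead, Matrix.vecTail]

lemma intE_URs (d : ℝ) : intE (URs d) = d := by
  rw [intE, show mC (URs d) = ![(0:ℝ), 0, 0] from rfl, show BC (URs d) = ![(1:ℝ), 2, 0] from rfl,
      show (URs d) 7 = d + 5/2 from rfl, show (URs d) 0 = 199/100 from rfl]
  norm_num [normSq3, Fin.sum_univ_three, Matrix.cons_val_two, Matrix.vecHead, Matrix.vecTail]

lemma idealP_ULs (d : ℝ) : idealP 1.4 (ULs d) = 2/5 * d := by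
  rw [idealP, intE_ULs]; norm_num

lemma idealP_UMs (d : ℝ) : idealP 1.4 (UMs d) = 2/5 * d := by
  rw [idealP, intE_UMs]; norm_num

lemma idealP_URs (d : ℝ) : idealP 1.4 (URs d) = 2/5 * d := by
  rw [idealP, intE_URs]; norm_num

lemma specR_ULs (d : ℝ) (hd0 : 0 ≤ d) (hd1 : d ≤ 1/400) : specR 1.4 0 (ULs d) = 10 := by
  rw [specR, cFast]
  have hv : velC (ULs d) 0 = 0 := by
    rw [velC, show mC (ULs d) 0 = 0 from rfl]; simp
  have hcs : cSound 1.4 (ULs d) ^ 2 = 56 * d := by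
    rw [cSound, Real.sq_sqrt]
    · rw [idealP_ULs, show (ULs d) 0 = 1/100 from rfl]; ring
    · rw [idealP_ULs, show (ULs d) 0 = 1/100 from rfl]; positivity
  rw [fastLike, show BC (ULs d) = ![(1:ℝ), 0, 0] from rfl, show (ULs d) 0 = 1/100 from rfl,
      show normSq3 ![(1:ℝ), 0, 0] = 1 by norm_num [normSq3, Fin.sum_univ_three, Matrix.cons_val_two, Matrix.vecHead, Matrix.vecTail],
      show (![(1:ℝ), 0, 0] : Fin 3 → ℝ) 0 = 1 from rfl, hv, hcs]
  have h1 : (56 * d + 1 / (1/100)) ^ 2 - 4 * (56 * d) * 1 ^ 2 / (1/100)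
      = (100 - 56 * d) ^ 2 := by ring
  rw [h1, Real.sqrt_sq (by linarith : (0:ℝ) ≤ 100 - 56 * d)]
  have h2 : 56 * d + 1 / (1/100) + (100 - 56 * d) = 200 := by ring
  rw [h2, show (200:ℝ) = 10 ^ 2 * 2 by norm_num,
      Real.sqrt_mul (by positivity : (0:ℝ) ≤ 10 ^ 2), Real.sqrt_sq (by norm_num : (0:ℝ) ≤ 10)]
  have hs2 : Real.sqrt 2 ≠ 0 := by positivity
  rw [abs_zero]
  field_simp
  norm_num

lemma specR_UMs (d : ℝ) (hd0 : 0 ≤ d) (hd1 : d ≤ 1/400) : specR 1.4 0 (UMs d) ≤ 10 := by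
  rw [specR, cFast]
  have hv : velC (UMs d) 0 = 0 := by
    rw [velC, show mC (UMs d) 0 = 0 from rfl]; simp
  have h0 : (0:ℝ) < (UMs d) 0 := by rw [show (UMs d) 0 = 1 from rfl]; norm_num
  have hb := fastLike_le (cSound 1.4 (UMs d)) (UMs d) 0 h0
  have hcs : cSound 1.4 (UMs d) ^ 2 = 14/25 * d := by
    rw [cSound, Real.sq_sqrt]
    · rw [idealP_UMs, show (UMs d) 0 = 1 from rfl]; ring
    · rw [idealP_UMs, show (UMs d) 0 = 1 from rfl]; positivity
  have harg : cSound 1.4 (UMs d) ^ 2 + normSq3 (BC (UMs d)) / (UMs d) 0 = 14/25 * d + 5 := by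
    rw [hcs, show BC (UMs d) = ![(1:ℝ), 2, 0] from rfl, show (UMs d) 0 = 1 from rfl,
        show normSq3 ![(1:ℝ), 2, 0] = 5 by norm_num [normSq3, Fin.sum_univ_three, Matrix.cons_val_two, Matrix.vecHead, Matrix.vecTail]]
    ring
  rw [harg] at hb
  have h3 : Real.sqrt (14/25 * d + 5) ≤ 10 := by
    rw [show (10:ℝ) = Real.sqrt (10 ^ 2) from (Real.sqrt_sq (by norm_num)).symm]
    apply Real.sqrt_le_sqrt; nlinarith
  rw [hv, abs_zero, zero_add]
  linarith

lemma specR_URs (d : ℝ) (hd0 : 0 ≤ d) (hd1 : d ≤ 1/400) : specR 1.4 0 (URs d) ≤ 10 := by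
  rw [specR, cFast]
  have hv : velC (URs d) 0 = 0 := by
    rw [velC, show mC (URs d) 0 = 0 from rfl]; simp
  have h0 : (0:ℝ) < (URs d) 0 := by rw [show (URs d) 0 = 199/100 from rfl]; norm_num
  have hb := fastLike_le (cSound 1.4 (URs d)) (URs d) 0 h0
  have hcs : cSound 1.4 (URs d) ^ 2 = 56/199 * d := by
    rw [cSound, Real.sq_sqrt]
    · rw [idealP_URs, show (URs d) 0 = 199/100 from rfl]; ring
    · rw [idealP_URs, show (URs d) 0 = 199/100 from rfl]; positivity
  have harg : cSound 1.4 (URs d) ^ 2 + normSq3 (BC (URs d)) / (URs d) 0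
      = 56/199 * d + 500/199 := by
    rw [hcs, show BC (URs d) = ![(1:ℝ), 2, 0] from rfl, show (URs d) 0 = 199/100 from rfl,
        show normSq3 ![(1:ℝ), 2, 0] = 5 by norm_num [normSq3, Fin.sum_univ_three, Matrix.cons_val_two, Matrix.vecHead, Matrix.vecTail]]
    ring
  rw [harg] at hb
  have h3 : Real.sqrt (56/199 * d + 500/199) ≤ 10 := by
    rw [show (10:ℝ) = Real.sqrt (10 ^ 2) from (Real.sqrt_sq (by norm_num)).symm]
    apply Real.sqrt_le_sqrt; nlinarith
  rw [hv, abs_zero, zero_add]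
  linarith

lemma flux_ULs (d : ℝ) :
    flux (idealP 1.4 (ULs d)) 0 (ULs d) = ![0, 2/5 * d - 1/2, 0, 0, 0, 20, 0, 0] := by
  rw [idealP_ULs]
  funext k
  rw [flux]
  have hvel : velC (ULs d) = ![0, -20, 0] := by
    funext j
    rw [velC, show mC (ULs d) = ![0, -1/5, 0] from rfl, show (ULs d) 0 = 1/100 from rfl]
    fin_cases j <;> norm_num
  rw [hvel, show BC (ULs d) = ![(1:ℝ), 0, 0] from rfl, show (ULs d) 7 = d + 5/2 from rfl,
      show (ULs d) 0 = 1/100 from rfl]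
  fin_cases k <;>
    norm_num [normSq3, dot3, Fin.sum_univ_three, Matrix.cons_val_two, Matrix.vecHead, Matrix.vecTail,
      show ((0:Fin 3) = 1) ↔ False by simp [Fin.ext_iff],
      show ((0:Fin 3) = 2) ↔ False by simp [Fin.ext_iff]] <;>
    ring

lemma flux_UMs (d : ℝ) :
    flux (idealP 1.4 (UMs d)) 0 (UMs d) = ![0, 2/5 * d + 3/2, -2, 0, 0, 0, 0, 0] := by
  rw [idealP_UMs]
  funext k
  rw [flux]
  have hvel : velC (UMs d) = ![0, 0, 0] := by
    funext j
    rw [velC, show mC (UMs d) = ![(0:ℝ), 0, 0] from rfl, show (UMs d) 0 = 1 from rfl]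
    fin_cases j <;> norm_num
  rw [hvel, show BC (UMs d) = ![(1:ℝ), 2, 0] from rfl, show (UMs d) 7 = d + 5/2 from rfl,
      show (UMs d) 0 = 1 from rfl]
  fin_cases k <;>
    norm_num [normSq3, dot3, Fin.sum_univ_three, Matrix.cons_val_two, Matrix.vecHead, Matrix.vecTail,
      show ((0:Fin 3) = 1) ↔ False by simp [Fin.ext_iff],
      show ((0:Fin 3) = 2) ↔ False by simp [Fin.ext_iff]] <;>
    ring

lemma flux_URs (d : ℝ) :
    flux (idealP 1.4 (URs d)) 0 (URs d) = ![0, 2/5 * d + 3/2, -2, 0, 0, 0, 0, 0] := by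
  rw [idealP_URs]
  funext k
  rw [flux]
  have hvel : velC (URs d) = ![0, 0, 0] := by
    funext j
    rw [velC, show mC (URs d) = ![(0:ℝ), 0, 0] from rfl, show (URs d) 0 = 199/100 from rfl]
    fin_cases j <;> norm_num
  rw [hvel, show BC (URs d) = ![(1:ℝ), 2, 0] from rfl, show (URs d) 7 = d + 5/2 from rfl,
      show (URs d) 0 = 199/100 from rfl]
  fin_cases k <;>
    norm_num [normSq3, dot3, Fin.sum_univ_three, Matrix.cons_val_two, Matrix.vecHead, Matrix.vecTail,
      show ((0:Fin 3) = 1) ↔ False by simp [Fin.ext_iff],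
      show ((0:Fin 3) = 2) ↔ False by simp [Fin.ext_iff]] <;>
    ring

lemma upd_eq (d C : ℝ) :
    UMs d - (C / 10) • (lfFluxIdeal 1.4 10 0 (UMs d) (URs d) - lfFluxIdeal 1.4 10 0 (ULs d) (UMs d))
      = ![1, -(C/10), 0, 0, 1, 2, 0, d + 5/2] := by
  rw [lfFluxIdeal, lfFluxIdeal, flux_ULs, flux_UMs, flux_URs]
  funext k
  simp only [Pi.sub_apply, Pi.add_apply, Pi.smul_apply, smul_eq_mul]
  fin_cases k <;> norm_num [ULs, UMs, URs] <;> ring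

lemma intE_upd (d C : ℝ) :
    intE ![1, -(C/10), 0, 0, 1, 2, 0, d + 5/2] = d - C ^ 2 / 200 := by
  rw [intE, show mC ![1, -(C/10), 0, 0, 1, 2, 0, d + 5/2] = ![-(C/10), 0, 0] from rfl,
      show BC ![1, -(C/10), 0, 0, 1, 2, 0, d + 5/2] = ![(1:ℝ), 2, 0] from rfl,
      show (![1, -(C/10), 0, 0, 1, 2, 0, d + 5/2] : Fin 8 → ℝ) 7 = d + 5/2 from rfl,
      show (![1, -(C/10), 0, 0, 1, 2, 0, d + 5/2] : Fin 8 → ℝ) 0 = 1 from rfl]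
  norm_num [normSq3, Fin.sum_univ_three, Matrix.cons_val_two, Matrix.vecHead, Matrix.vecTail]
  ring

/-- the 1D LF scheme with the standard viscosity parameter is
not positivity-preserving for any CFL number: with `γ = 1.4`, for every
`C > 0` there are `U_L, U_M, U_R ∈ 𝒢` with equal first magnetic components
such that, with `α = max{𝓡₁(U_L), 𝓡₁(U_M), 𝓡₁(U_R)}`, the LF update
`U_M − (C/α)(F̂₁(U_M,U_R) − F̂₁(U_L,U_M))` is not in `𝒢`. -/
theorem lf_scheme_1D_not_PP (C : ℝ) (hC : 0 < C) :
    ∃ UL UM UR : Fin 8 → ℝ,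
      UL ∈ admisSet ∧ UM ∈ admisSet ∧ UR ∈ admisSet ∧
      UL 4 = UM 4 ∧ UM 4 = UR 4 ∧
      (let γ : ℝ := 1.4
       let α : ℝ := max (specR γ 0 UL) (max (specR γ 0 UM) (specR γ 0 UR))
       UM - (C / α) • (lfFluxIdeal γ α 0 UM UR - lfFluxIdeal γ α 0 UL UM)
         ∉ admisSet) := by
  have hC2 : 0 < C ^ 2 := by positivity
  set d : ℝ := min (C ^ 2) 1 / 400 with hddef
  have hd0 : 0 < d := by
    rw [hddef]
    have := lt_min hC2 one_pos
    linarith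
  have hd1 : d ≤ 1 / 400 := by
    rw [hddef]
    have := min_le_right (C ^ 2) 1
    linarith
  have hdC : d ≤ C ^ 2 / 400 := by
    rw [hddef]
    have := min_le_left (C ^ 2) 1
    linarith
  have hα : max (specR 1.4 0 (ULs d)) (max (specR 1.4 0 (UMs d)) (specR 1.4 0 (URs d))) = 10 := by
    rw [specR_ULs d hd0.le hd1]
    exact max_eq_left (max_le (specR_UMs d hd0.le hd1) (specR_URs d hd0.le hd1))
  refine ⟨ULs d, UMs d, URs d, ?_, ?_, ?_, rfl, rfl, ?_⟩
  · exact ⟨by rw [show (ULs d) 0 = 1/100 from rfl]; norm_num, by rw [intE_ULs]; exact hd0⟩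
  · exact ⟨by rw [show (UMs d) 0 = 1 from rfl]; norm_num, by rw [intE_UMs]; exact hd0⟩
  · exact ⟨by rw [show (URs d) 0 = 199/100 from rfl]; norm_num, by rw [intE_URs]; exact hd0⟩
  · show UMs d -
        (C / max (specR 1.4 0 (ULs d)) (max (specR 1.4 0 (UMs d)) (specR 1.4 0 (URs d)))) •
        (lfFluxIdeal 1.4
            (max (specR 1.4 0 (ULs d)) (max (specR 1.4 0 (UMs d)) (specR 1.4 0 (URs d)))) 0
            (UMs d) (URs d)
          - lfFluxIdeal 1.4
            (max (specR 1.4 0 (ULs d)) (max (specR 1.4 0 (UMs d)) (specR 1.4 0 (URs d)))) 0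
            (ULs d) (UMs d))
        ∉ admisSet
    rw [hα, upd_eq]
    intro hmem
    have h2 := hmem.2
    rw [intE_upd] at h2
    nlinarith
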